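/- In the lazy-voter model with lexicographic tie-breaking, the additive price of anarchy equals n − 2: the truthful score of any PNE winner is at most the truthful winner's score minus (n−2) in the worst case, and this bound is tight; in particular, for every n there is an n-voter profile where the truthful winner has score n−1 but some PNE elects a candidate with truthful score 1. -/
import Mathlib


open Finset

/-- A ballot vector: each voter either abstains (`none`) or votes for a candidate. -/
abbrev Ballot (n m : ℕ) := Fin n → Option (Fin m)

/-- The plurality score of candidate `c` under ballot vector `b`. -/
def sc {n m : ℕ} (b : Ballot n m) (c : Fin m) : ℕ :=
  (univ.filter fun i => b i = some c).card

/-- The maximum plurality score. -/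
def maxScore {n m : ℕ} (b : Ballot n m) : ℕ :=
  univ.sup fun c : Fin m => sc b c

/-- The winning set `W(b)`: candidates with maximum score. -/
def winSet {n m : ℕ} (b : Ballot n m) : Finset (Fin m) :=
  univ.filter fun c => sc b c = maxScore b

/-- `H(b)`: candidates whose score is the maximum minus one. -/
def Hset {n m : ℕ} (b : Ballot n m) : Finset (Fin m) :=
  univ.filter fun c => sc b c + 1 = maxScore b

/-- `H'(b)`: candidates whose score is the maximum minus two. -/
def H'set {n m : ℕ} (b : Ballot n m) : Finset (Fin m) :=
  univ.filter fun c => sc b c + 2 = maxScore b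

/-- `c` is the winner under lexicographic tie-breaking: the minimum-index member of `W(b)`. -/
def IsLexWin {n m : ℕ} (b : Ballot n m) (c : Fin m) : Prop :=
  c ∈ winSet b ∧ ∀ c' ∈ winSet b, (c : ℕ) ≤ (c' : ℕ)

/-- The (degenerate) lottery induced by lexicographic tie-breaking. -/
def pLex {n m : ℕ} (b : Ballot n m) : Fin m → ℚ := fun c =>
  if c ∈ winSet b ∧ ∀ c' ∈ winSet b, (c : ℕ) ≤ (c' : ℕ) then 1 else 0

/-- The lottery induced by random-candidate tie-breaking: uniform over `W(b)`. -/
def pRC {n m : ℕ} (b : Ballot n m) : Fin m → ℚ := fun c =>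
  if c ∈ winSet b then ((winSet b).card : ℚ)⁻¹ else 0

/-- The lottery induced by random-voter tie-breaking: a uniformly random voter's
favourite member of `W(b)` is elected. -/
def pRV {n m : ℕ} (u : Fin n → Fin m → ℕ) (b : Ballot n m) : Fin m → ℚ := fun c =>
  ((univ.filter fun i : Fin n =>
      c ∈ winSet b ∧ ∀ c' ∈ winSet b, u i c' ≤ u i c).card : ℚ) / (n : ℚ)

/-- Expected utility of a lottery `p` for a voter with utility function `ui`. -/
def EU {m : ℕ} (ui : Fin m → ℕ) (p : Fin m → ℚ) : ℚ := ∑ c, p c * (ui c : ℚ)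

/-- Payoff of lazy voter `i`: expected utility plus a bonus `ε` for abstaining. -/
def lazyU {n m : ℕ} (p : Ballot n m → Fin m → ℚ) (u : Fin n → Fin m → ℕ)
    (ε : ℚ) (i : Fin n) (b : Ballot n m) : ℚ :=
  EU (u i) (p b) + if b i = none then ε else 0

/-- Pure Nash equilibrium of the lazy-voter game. -/
def lazyPNE {n m : ℕ} (p : Ballot n m → Fin m → ℚ) (u : Fin n → Fin m → ℕ)
    (ε : ℚ) (b : Ballot n m) : Prop :=
  ∀ (i : Fin n) (b' : Option (Fin m)),
    lazyU p u ε i (Function.update b i b') ≤ lazyU p u ε i b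

/-- View a non-abstaining (truth-biased) ballot vector as a general ballot vector. -/
def tv {n m : ℕ} (b : Fin n → Fin m) : Ballot n m := fun i => some (b i)

/-- Payoff of truth-biased voter `i`: expected utility plus a bonus `ε` for voting
truthfully (abstention, which would yield `-∞`, is never used). -/
def tbU {n m : ℕ} (p : Ballot n m → Fin m → ℚ) (u : Fin n → Fin m → ℕ)
    (a : Fin n → Fin m) (ε : ℚ) (i : Fin n) (b : Fin n → Fin m) : ℚ :=
  EU (u i) (p (tv b)) + if b i = a i then ε else 0

/-- Pure Nash equilibrium of the truth-biased game. -/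
def tbPNE {n m : ℕ} (p : Ballot n m → Fin m → ℚ) (u : Fin n → Fin m → ℕ)
    (a : Fin n → Fin m) (ε : ℚ) (b : Fin n → Fin m) : Prop :=
  ∀ (i : Fin n) (b' : Fin m),
    tbU p u a ε i (Function.update b i b') ≤ tbU p u a ε i b


lemma sc_sum {n m : ℕ} (b : Ballot n m) (x : Fin m) :
    sc b x = ∑ i, if b i = some x then 1 else 0 := by
  rw [sc, Finset.card_filter]

lemma sc_update {n m : ℕ} (b : Ballot n m) (i : Fin n) (v : Option (Fin m)) (x : Fin m) :
    sc (Function.update b i v) x + (if b i = some x then 1 else 0)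
      = sc b x + (if v = some x then 1 else 0) := by
  simp only [sc_sum]
  rw [← Finset.add_sum_erase _ _ (mem_univ i), ← Finset.add_sum_erase _ _ (mem_univ i)]
  have h : ∀ j ∈ univ.erase i,
      (if Function.update b i v j = some x then (1:ℕ) else 0)
        = (if b j = some x then 1 else 0) := by
    intro j hj
    rw [Function.update_of_ne (Finset.ne_of_mem_erase hj)]
  rw [Finset.sum_congr rfl h, Function.update_self]
  ring

lemma sc_le_maxScore {n m : ℕ} (b : Ballot n m) (x : Fin m) : sc b x ≤ maxScore b :=
  Finset.le_sup (mem_univ x)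

lemma isLexWin_of {n m : ℕ} (b : Ballot n m) (c : Fin m)
    (h1 : ∀ x, sc b x ≤ sc b c) (h2 : ∀ x, sc b x = sc b c → (c : ℕ) ≤ (x : ℕ)) :
    IsLexWin b c := by
  have hmax : maxScore b = sc b c :=
    le_antisymm (Finset.sup_le fun x _ => h1 x) (Finset.le_sup (mem_univ c))
  refine ⟨by simp [winSet, hmax], ?_⟩
  intro c' hc'
  simp only [winSet, mem_filter, mem_univ, true_and, hmax] at hc'
  exact h2 c' hc'

lemma isLexWin_unique {n m : ℕ} {b : Ballot n m} {c c' : Fin m}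
    (h : IsLexWin b c) (h' : IsLexWin b c') : c = c' :=
  Fin.ext (le_antisymm (h.2 c' h'.1) (h'.2 c h.1))

lemma EU_pLex {n m : ℕ} {b : Ballot n m} {c : Fin m} (h : IsLexWin b c) (ui : Fin m → ℕ) :
    EU ui (pLex b) = (ui c : ℚ) := by
  unfold EU pLex
  have h' : c ∈ winSet b ∧ ∀ c' ∈ winSet b, (c : ℕ) ≤ (c' : ℕ) := h
  rw [Finset.sum_eq_single c]
  · rw [if_pos h', one_mul]
  · intro c' _ hne
    rw [if_neg, zero_mul]
    intro hc'
    exact hne (isLexWin_unique hc' h)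
  · intro hc
    exact absurd (mem_univ c) hc

lemma lazyU_eq {n m : ℕ} {b : Ballot n m} {c : Fin m} (h : IsLexWin b c)
    (u : Fin n → Fin m → ℕ) (ε : ℚ) (i : Fin n) :
    lazyU pLex u ε i b = (u i c : ℚ) + if b i = none then ε else 0 := by
  unfold lazyU
  rw [EU_pLex h]

lemma sc_tv_pos {n m : ℕ} (a : Fin n → Fin m) (c : Fin m) (i : Fin n) (hi : a i = c) :
    1 ≤ sc (tv a) c := by
  rw [sc]
  exact Finset.card_pos.mpr ⟨i, by simp [tv, hi]⟩

lemma sc_add_sc_le {n m : ℕ} (b : Ballot n m) {c d : Fin m} (hcd : c ≠ d) :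
    sc b c + sc b d ≤ n := by
  classical
  have hdisj : Disjoint (univ.filter fun i => b i = some c)
      (univ.filter fun i => b i = some d) := by
    rw [Finset.disjoint_left]
    intro i hi1 hi2
    simp only [mem_filter, mem_univ, true_and] at hi1 hi2
    rw [hi1] at hi2
    exact hcd (Option.some_injective _ hi2)
  calc sc b c + sc b d
      = ((univ.filter fun i => b i = some c) ∪ (univ.filter fun i => b i = some d)).card := by
        rw [Finset.card_union_of_disjoint hdisj]; rfl
    _ ≤ (univ : Finset (Fin n)).card := Finset.card_le_card (Finset.subset_univ _)
    _ = n := Finset.card_univ.trans (Fintype.card_fin n)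

lemma sc_update_ne {n m : ℕ} (b : Ballot n m) (i : Fin n) (v : Option (Fin m)) (x : Fin m)
    (h1 : b i ≠ some x) (h2 : v ≠ some x) :
    sc (Function.update b i v) x = sc b x := by
  have h := sc_update b i v x
  rw [if_neg h1, if_neg h2] at h
  omega

lemma sc_update_out {n m : ℕ} (b : Ballot n m) (i : Fin n) (v : Option (Fin m)) (x : Fin m)
    (h1 : b i = some x) (h2 : v ≠ some x) :
    sc (Function.update b i v) x + 1 = sc b x := by
  have h := sc_update b i v x
  rw [if_pos h1, if_neg h2] at h
  omega

lemma sc_update_in {n m : ℕ} (b : Ballot n m) (i : Fin n) (v : Option (Fin m)) (x : Fin m)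
    (h1 : b i ≠ some x) (h2 : v = some x) :
    sc (Function.update b i v) x = sc b x + 1 := by
  have h := sc_update b i v x
  rw [if_neg h1, if_pos h2] at h
  omega

/-- In any lazy PNE under lex tie-breaking, the winner is somebody's favourite. -/
lemma pne_winner_has_fan {n m : ℕ} (hn : 0 < n) (hm : 0 < m)
    (u : Fin n → Fin m → ℕ) (hu : ∀ i, Function.Injective (u i))
    (ε : ℚ) (hε0 : 0 < ε) (hε1 : ε < 1)
    (a : Fin n → Fin m) (ha : ∀ i c, u i c ≤ u i (a i))
    (b : Ballot n m) (c : Fin m) (hb : lazyPNE pLex u ε b) (hc : IsLexWin b c) :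
    ∃ i, a i = c := by
  classical
  have hcc : sc b c = maxScore b := by
    have := hc.1; simpa [winSet] using this
  -- Step A: every cast vote is for c.
  have hAll : ∀ i d, b i = some d → d = c := by
    intro i d hbi
    by_contra hdc
    have hscd : sc (Function.update b i none) d + 1 = sc b d :=
      sc_update_out b i none d hbi (by simp)
    have hsc : ∀ x, x ≠ d → sc (Function.update b i none) x = sc b x := by
      intro x hx
      exact sc_update_ne b i none x (by rw [hbi]; simp [Ne.symm hx]) (by simp)
    have hb2 : IsLexWin (Function.update b i none) c := by
      apply isLexWin_of
      · intro x
        rw [hsc c (Ne.symm hdc), hcc]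
        rcases eq_or_ne x d with rfl | hx
        · have := sc_le_maxScore b x
          omega
        · rw [hsc x hx]
          exact sc_le_maxScore b x
      · intro x hx
        rw [hsc c (Ne.symm hdc), hcc] at hx
        rcases eq_or_ne x d with rfl | hxd
        · have := sc_le_maxScore b x
          omega
        · rw [hsc x hxd] at hx
          exact hc.2 x (by simp [winSet, hx])
    have hle := hb i none
    rw [lazyU_eq hb2 u ε i, lazyU_eq hc u ε i] at hle
    rw [Function.update_self, if_pos rfl, hbi, if_neg (by simp)] at hle
    linarith
  -- all candidates other than c have score 0
  have hzero : ∀ x, x ≠ c → sc b x = 0 := by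
    intro x hx
    rw [sc, Finset.card_eq_zero, Finset.filter_eq_empty_iff]
    intro i _ hix
    exact hx (hAll i x hix)
  rcases Nat.lt_or_ge (sc b c) 1 with hk | hk
  · -- no votes cast at all
    have hk0 : sc b c = 0 := by omega
    have hzall : ∀ x, sc b x = 0 := by
      intro x
      rcases eq_or_ne x c with rfl | hx
      · exact hk0
      · exact hzero x hx
    have hnone : ∀ i, b i = none := by
      intro i
      cases hbi : b i with
      | none => rfl
      | some d =>
        have hd : d = c := hAll i d hbi
        have : 1 ≤ sc b c := by
          rw [sc]
          exact Finset.card_pos.mpr ⟨i, by simp [hbi, hd]⟩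
        omega
    have key : ∀ i : Fin n, a i = c := by
      intro i
      by_contra hni
      have hsai : sc (Function.update b i (some (a i))) (a i) = 1 := by
        rw [sc_update_in b i (some (a i)) (a i) (by rw [hnone i]; simp) rfl, hzall]
      have hsx : ∀ x, x ≠ a i → sc (Function.update b i (some (a i))) x = 0 := by
        intro x hx
        rw [sc_update_ne b i (some (a i)) x (by rw [hnone i]; simp) (by simp [Ne.symm hx]),
          hzall]
      have hb2 : IsLexWin (Function.update b i (some (a i))) (a i) := by
        apply isLexWin_of
        · intro x
          rcases eq_or_ne x (a i) with rfl | hx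
          · exact le_refl _
          · rw [hsx x hx, hsai]; omega
        · intro x hx
          rcases eq_or_ne x (a i) with rfl | hxa
          · exact le_refl _
          · rw [hsx x hxa, hsai] at hx; omega
      have hle := hb i (some (a i))
      rw [lazyU_eq hb2 u ε i, lazyU_eq hc u ε i] at hle
      rw [Function.update_self, if_neg (by simp), hnone i, if_pos rfl] at hle
      have hlt : u i c < u i (a i) :=
        lt_of_le_of_ne (ha i c) (fun h => hni (hu i h.symm))
      have : (u i c : ℚ) + 1 ≤ (u i (a i) : ℚ) := by exact_mod_cast hlt
      linarith
    exact ⟨⟨0, hn⟩, key _⟩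
  -- some vote is cast; it is for c
  obtain ⟨i, hi⟩ : ∃ i, b i = some c := by
    have hne : (univ.filter fun j => b j = some c).Nonempty :=
      Finset.card_pos.mp (by rw [← sc]; omega)
    obtain ⟨i, hi⟩ := hne
    exact ⟨i, by simpa using hi⟩
  rcases Nat.lt_or_ge (sc b c) 2 with hk2 | hk2
  · -- exactly one vote: the voter's favourite must be c
    refine ⟨i, ?_⟩
    by_contra hni
    have hac : a i ≠ c := hni
    have hsai : sc (Function.update b i (some (a i))) (a i) = 1 := by
      rw [sc_update_in b i (some (a i)) (a i) (by rw [hi]; simp [Ne.symm hac]) rfl,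
        hzero _ hac]
    have hscc : sc (Function.update b i (some (a i))) c = 0 := by
      have h := sc_update_out b i (some (a i)) c hi (by simp [hac])
      omega
    have hsx : ∀ x, x ≠ a i → sc (Function.update b i (some (a i))) x = 0 := by
      intro x hx
      rcases eq_or_ne x c with rfl | hxc
      · exact hscc
      · rw [sc_update_ne b i (some (a i)) x (by rw [hi]; simp [Ne.symm hxc])
          (by simp [Ne.symm hx]), hzero _ hxc]
    have hb2 : IsLexWin (Function.update b i (some (a i))) (a i) := by
      apply isLexWin_of
      · intro x
        rcases eq_or_ne x (a i) with rfl | hx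
        · exact le_refl _
        · rw [hsx x hx, hsai]; omega
      · intro x hx
        rcases eq_or_ne x (a i) with rfl | hxa
        · exact le_refl _
        · rw [hsx x hxa, hsai] at hx; omega
    have hle := hb i (some (a i))
    rw [lazyU_eq hb2 u ε i, lazyU_eq hc u ε i] at hle
    rw [Function.update_self, if_neg (by simp), hi, if_neg (by simp)] at hle
    have hlt : u i c < u i (a i) :=
      lt_of_le_of_ne (ha i c) (fun h => hni (hu i h.symm))
    have : (u i c : ℚ) + 1 ≤ (u i (a i) : ℚ) := by exact_mod_cast hlt
    linarith
  · -- at least two votes for c: the voter could profitably abstain; contradiction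
    exfalso
    have hscc : sc (Function.update b i none) c + 1 = sc b c :=
      sc_update_out b i none c hi (by simp)
    have hsx : ∀ x, x ≠ c → sc (Function.update b i none) x = 0 := by
      intro x hx
      rw [sc_update_ne b i none x (by rw [hi]; simp [Ne.symm hx]) (by simp), hzero _ hx]
    have hb2 : IsLexWin (Function.update b i none) c := by
      apply isLexWin_of
      · intro x
        rcases eq_or_ne x c with rfl | hx
        · exact le_refl _
        · rw [hsx x hx]; omega
      · intro x hx
        rcases eq_or_ne x c with rfl | hxc
        · exact le_refl _
        · rw [hsx x hxc] at hx; omega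
    have hle := hb i none
    rw [lazyU_eq hb2 u ε i, lazyU_eq hc u ε i] at hle
    rw [Function.update_self, if_pos rfl, hi, if_neg (by simp)] at hle
    linarith

theorem stmt16 :
    (∀ (n m : ℕ), 0 < n → 0 < m →
      ∀ u : Fin n → Fin m → ℕ, (∀ i, Function.Injective (u i)) →
      ∀ ε : ℚ, 0 < ε → ε < min ((m : ℚ)⁻¹) ((n : ℚ)⁻¹) →
      ∀ a : Fin n → Fin m, (∀ i c, u i c ≤ u i (a i)) →
      ∀ (b : Ballot n m) (c : Fin m), lazyPNE pLex u ε b → IsLexWin b c →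
        maxScore (tv a) ≤ sc (tv a) c + (n - 2)) ∧
    (∀ n : ℕ, 3 ≤ n →
      ∃ (m : ℕ), 0 < m ∧
      ∃ u : Fin n → Fin m → ℕ, (∀ i, Function.Injective (u i)) ∧
      ∃ ε : ℚ, 0 < ε ∧ ε < min ((m : ℚ)⁻¹) ((n : ℚ)⁻¹) ∧
      ∃ a : Fin n → Fin m, (∀ i c, u i c ≤ u i (a i)) ∧
      ∃ (b : Ballot n m) (c : Fin m), lazyPNE pLex u ε b ∧ IsLexWin b c ∧
        sc (tv a) c = 1 ∧ maxScore (tv a) = n - 1) := by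
  constructor
  · -- upper bound
    intro n m hn hm u hu ε hε0 hε1 a ha b c hb hc
    have hinv : ((n : ℚ))⁻¹ ≤ 1 := by
      apply inv_le_one_of_one_le₀
      exact_mod_cast hn
    have hε1' : ε < 1 := lt_of_lt_of_le hε1 ((min_le_right _ _).trans hinv)
    obtain ⟨i, hi⟩ := pne_winner_has_fan hn hm u hu ε hε0 hε1' a ha b c hb hc
    have h1 : 1 ≤ sc (tv a) c := sc_tv_pos a c i hi
    apply Finset.sup_le
    intro d _
    rcases eq_or_ne d c with rfl | hdc
    · omega
    · have := sc_add_sc_le (tv a) hdc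
      omega
  · -- tightness
    intro n hn
    haveI : NeZero n := ⟨by omega⟩
    classical
    have fin3 : ∀ x : Fin 3, x = 0 ∨ x = 1 ∨ x = 2 := by decide
    set u : Fin n → Fin 3 → ℕ :=
      fun i k => if i = 0 then (if k = 1 then 2 else if k = 2 then 1 else 0) else (k : ℕ)
      with hu_def
    set a : Fin n → Fin 3 := fun i => if i = 0 then (1 : Fin 3) else 2 with ha_def
    set b : Ballot n 3 := fun i => if i = 0 then some (1 : Fin 3) else none with hb_def
    set ε : ℚ := 1 / (2 * n) with hε_def
    have hnq : (0 : ℚ) < (n : ℚ) := by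
      have : (0:ℕ) < n := by omega
      exact_mod_cast this
    have hn3 : (3 : ℚ) ≤ (n : ℚ) := by exact_mod_cast hn
    have hε0 : 0 < ε := by rw [hε_def]; positivity
    have hεsmall : ε < 1 := by
      rw [hε_def, div_lt_one (by positivity)]
      linarith
    -- utility facts
    have hu0 : ∀ k : Fin 3, u 0 k ≤ 2 := by
      intro k
      rcases fin3 k with rfl | rfl | rfl <;> simp [hu_def]
    have hui : ∀ (i : Fin n), i ≠ 0 → ∀ k : Fin 3, u i k = (k : ℕ) := by
      intro i hi k
      simp [hu_def, hi]
    -- scores under b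
    have hscb1 : sc b 1 = 1 := by
      rw [sc_sum]
      rw [Finset.sum_congr rfl (fun i _ => show (if b i = some 1 then (1:ℕ) else 0)
        = if i = 0 then 1 else 0 by by_cases h : i = 0 <;> simp [hb_def, h])]
      simp
    have hscbx : ∀ x : Fin 3, x ≠ 1 → sc b x = 0 := by
      intro x hx
      rw [sc, Finset.card_eq_zero, Finset.filter_eq_empty_iff]
      intro i _ hix
      by_cases h : i = 0 <;> simp [hb_def, h] at hix
      exact hx hix.symm
    have hwinb : IsLexWin b 1 := by
      apply isLexWin_of
      · intro x
        rcases eq_or_ne x 1 with rfl | hx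
        · exact le_refl _
        · rw [hscbx x hx, hscb1]; omega
      · intro x hx
        rcases eq_or_ne x 1 with rfl | hx1
        · exact le_refl _
        · rw [hscbx x hx1, hscb1] at hx; omega
    -- scores under truthful profile
    have hsta1 : sc (tv a) 1 = 1 := by
      rw [sc_sum]
      rw [Finset.sum_congr rfl (fun i _ => show (if tv a i = some 1 then (1:ℕ) else 0)
        = if i = 0 then 1 else 0 by by_cases h : i = 0 <;> simp [tv, ha_def, h])]
      simp
    have hsta2 : sc (tv a) 2 = n - 1 := by
      rw [sc]
      have hfe : (univ.filter fun j => tv a j = some 2) = univ.erase 0 := by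
        ext j
        by_cases h : j = 0 <;> simp [tv, ha_def, h]
      rw [hfe, Finset.card_erase_of_mem (mem_univ 0), Finset.card_univ, Fintype.card_fin]
    have hsta0 : sc (tv a) 0 = 0 := by
      rw [sc, Finset.card_eq_zero, Finset.filter_eq_empty_iff]
      intro i _ hix
      by_cases h : i = 0 <;> simp [tv, ha_def, h] at hix
    refine ⟨3, by norm_num, u, ?_, ε, hε0, ?_, a, ?_, b, 1, ?_, hwinb, hsta1, ?_⟩
    · -- injectivity
      intro i
      by_cases h : i = 0
      · subst h
        intro x y hxy
        have hxy' : (fun k : Fin 3 => if k = 1 then (2:ℕ) else if k = 2 then 1 else 0) x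
            = (fun k : Fin 3 => if k = 1 then (2:ℕ) else if k = 2 then 1 else 0) y := by
          simpa [hu_def] using hxy
        exact (by decide : Function.Injective
          fun k : Fin 3 => if k = 1 then (2:ℕ) else if k = 2 then 1 else 0) hxy'
      · intro x y hxy
        simp only [hu_def, if_neg h] at hxy
        exact Fin.ext hxy
    · -- ε small enough
      rw [lt_min_iff]
      constructor
      · rw [hε_def, show (((3:ℕ):ℚ))⁻¹ = 1 / 3 by norm_num,
          div_lt_div_iff₀ (by positivity) (by norm_num)]
        linarith
      · rw [hε_def, inv_eq_one_div, div_lt_div_iff₀ (by positivity) hnq]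
        linarith
    · -- a is top choice
      intro i c
      by_cases h : i = 0
      · subst h
        have : a 0 = 1 := by simp [ha_def]
        rw [this]
        rcases fin3 c with rfl | rfl | rfl <;> simp [hu_def]
      · have : a i = 2 := by simp [ha_def, h]
        rw [this, hui i h, hui i h]
        have := c.isLt
        omega
    · -- PNE
      intro i b'
      rw [lazyU_eq hwinb u ε i]
      by_cases hi0 : i = 0
      · subst hi0
        have hb0 : b 0 = some 1 := by simp [hb_def]
        rw [hb0, if_neg (by simp)]
        cases b' with
        | none =>
          have hall0 : ∀ x : Fin 3, sc (Function.update b 0 none) x = 0 := by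
            intro x
            rcases eq_or_ne x 1 with rfl | hx
            · have := sc_update_out b 0 none 1 hb0 (by simp)
              omega
            · rw [sc_update_ne b 0 none x (by rw [hb0]; simp [Ne.symm hx]) (by simp)]
              exact hscbx x hx
          have hw2 : IsLexWin (Function.update b 0 none) 0 := by
            apply isLexWin_of
            · intro x; rw [hall0, hall0]
            · intro x _; simp
          rw [lazyU_eq hw2 u ε 0, Function.update_self, if_pos rfl]
          have h00 : u 0 0 = 0 := by simp [hu_def]
          have h01 : u 0 1 = 2 := by simp [hu_def]
          rw [h00, h01]
          push_cast
          linarith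
        | some k =>
          have hsck : sc (Function.update b 0 (some k)) k = 1 := by
            rcases eq_or_ne k 1 with rfl | hk
            · have h := sc_update b 0 (some 1) 1
              rw [hb0, if_pos rfl, hscb1] at h
              omega
            · rw [sc_update_in b 0 (some k) k (by rw [hb0]; simp [Ne.symm hk]) rfl]
              rw [hscbx k hk]
          have hscx : ∀ x : Fin 3, x ≠ k → sc (Function.update b 0 (some k)) x = 0 := by
            intro x hx
            rcases eq_or_ne x 1 with rfl | hx1
            · have hk1 : k ≠ 1 := Ne.symm hx
              have h := sc_update_out b 0 (some k) 1 hb0 (by simp [hk1])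
              rw [hscb1] at h
              omega
            · rw [sc_update_ne b 0 (some k) x (by rw [hb0]; simp [Ne.symm hx1])
                (by simp [Ne.symm hx])]
              exact hscbx x hx1
          have hw2 : IsLexWin (Function.update b 0 (some k)) k := by
            apply isLexWin_of
            · intro x
              rcases eq_or_ne x k with rfl | hx
              · exact le_refl _
              · rw [hscx x hx, hsck]; omega
            · intro x hx
              rcases eq_or_ne x k with rfl | hxk
              · exact le_refl _
              · rw [hscx x hxk, hsck] at hx; omega
          rw [lazyU_eq hw2 u ε 0, Function.update_self, if_neg (by simp)]
          have h01 : u 0 1 = 2 := by simp [hu_def]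
          rw [h01]
          have h2 : (u 0 k : ℚ) ≤ ((2:ℕ) : ℚ) := by exact_mod_cast hu0 k
          push_cast at h2 ⊢
          linarith
      · have hbi : b i = none := by simp [hb_def, hi0]
        rw [hbi, if_pos rfl]
        cases b' with
        | none =>
          have : Function.update b i none = b := by
            conv_lhs => rw [← hbi]
            exact Function.update_eq_self i b
          rw [this, lazyU_eq hwinb u ε i, hbi, if_pos rfl]
        | some k =>
          have hsck : sc (Function.update b i (some k)) k = sc b k + 1 :=
            sc_update_in b i (some k) k (by rw [hbi]; simp) rfl
          have hscx : ∀ x : Fin 3, x ≠ k → sc (Function.update b i (some k)) x = sc b x := by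
            intro x hx
            exact sc_update_ne b i (some k) x (by rw [hbi]; simp) (by simp [Ne.symm hx])
          have hkey : ∃ w : Fin 3, IsLexWin (Function.update b i (some k)) w ∧ u i w ≤ u i 1 := by
            rcases fin3 k with rfl | rfl | rfl
            · -- vote for 0 : winner is 0? no, scores 0↦1, 1↦1; lex winner 0
              refine ⟨0, ?_, ?_⟩
              · apply isLexWin_of
                · intro x
                  rw [show sc (Function.update b i (some 0)) 0 = 1 by
                    rw [hsck, hscbx 0 (by decide)]]
                  rcases fin3 x with rfl | rfl | rfl
                  · rw [hsck, hscbx 0 (by decide)]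
                  · rw [hscx 1 (by decide), hscb1]
                  · rw [hscx 2 (by decide), hscbx 2 (by decide)]; omega
                · intro x _; simp
              · rw [hui i hi0, hui i hi0]; decide
            · -- vote for 1 : winner 1
              refine ⟨1, ?_, le_refl _⟩
              apply isLexWin_of
              · intro x
                rw [show sc (Function.update b i (some 1)) 1 = 2 by rw [hsck, hscb1]]
                rcases fin3 x with rfl | rfl | rfl
                · rw [hscx 0 (by decide), hscbx 0 (by decide)]; omega
                · rw [hsck, hscb1]
                · rw [hscx 2 (by decide), hscbx 2 (by decide)]; omega
              · intro x hx
                rw [show sc (Function.update b i (some 1)) 1 = 2 by rw [hsck, hscb1]] at hx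
                rcases fin3 x with rfl | rfl | rfl
                · rw [hscx 0 (by decide), hscbx 0 (by decide)] at hx; omega
                · decide
                · rw [hscx 2 (by decide), hscbx 2 (by decide)] at hx; omega
            · -- vote for 2 : scores 1↦1, 2↦1, lex winner 1
              refine ⟨1, ?_, le_refl _⟩
              apply isLexWin_of
              · intro x
                rw [show sc (Function.update b i (some 2)) 1 = 1 by
                  rw [hscx 1 (by decide), hscb1]]
                rcases fin3 x with rfl | rfl | rfl
                · rw [hscx 0 (by decide), hscbx 0 (by decide)]; omega
                · rw [hscx 1 (by decide), hscb1]
                · rw [hsck, hscbx 2 (by decide)]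
              · intro x hx
                rw [show sc (Function.update b i (some 2)) 1 = 1 by
                  rw [hscx 1 (by decide), hscb1]] at hx
                rcases fin3 x with rfl | rfl | rfl
                · rw [hscx 0 (by decide), hscbx 0 (by decide)] at hx; omega
                · decide
                · decide
          obtain ⟨w, hw2, hwle⟩ := hkey
          rw [lazyU_eq hw2 u ε i, Function.update_self, if_neg (by simp)]
          have : (u i w : ℚ) ≤ (u i 1 : ℚ) := by exact_mod_cast hwle
          linarith
    · -- maxScore of truthful profile
      apply le_antisymm
      · apply Finset.sup_le
        intro x _
        rcases fin3 x with rfl | rfl | rfl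
        · rw [hsta0]; omega
        · rw [hsta1]; omega
        · rw [hsta2]
      · rw [← hsta2]
        exact Finset.le_sup (mem_univ 2)
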